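/- Let F : ℝ → ℂ be continuously differentiable with sup_{s ≥ 0} (|F(s)| + |F′(s)|) < ∞. Let g : ℝ → ℂ be measurable with ∫_ℝ (1+|y|)|g(y)| dy < ∞ and ∫_ℝ g(y) dy = 0. Then for every λ > 0 and every x ∈ ℝ, both of the following integrals converge absolutely and ∫_ℝ F(λ|x−y|) g(y) dy = −λ·∫_ℝ ∫₀¹ sgn(x−θy)·F′(λ|x−θy|)·y·g(y) dθ dy. -/

import Mathlib

open MeasureTheory

private lemma sign_measurable' : Measurable Real.sign := by
  have h : Real.sign = fun r : ℝ => if r < 0 then (-1 : ℝ) else if 0 < r then 1 else 0 := by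
    funext r; rfl
  rw [h]
  exact Measurable.ite (measurableSet_lt measurable_id measurable_const) measurable_const
    (Measurable.ite (measurableSet_lt measurable_const measurable_id) measurable_const
      measurable_const)

private lemma abs_sign_le' (r : ℝ) : |Real.sign r| ≤ 1 := by
  rcases lt_trichotomy r 0 with h | h | h
  · simp [Real.sign_of_neg h]
  · simp [h, Real.sign_zero]
  · simp [Real.sign_of_pos h]

private lemma hasDerivAt_abs_sign {u : ℝ} (hu : u ≠ 0) :
    HasDerivAt (fun t : ℝ => |t|) (Real.sign u) u := by
  rcases hu.lt_or_gt with h | h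
  · simpa [Real.sign_of_neg h] using hasDerivAt_abs_neg h
  · simpa [Real.sign_of_pos h] using hasDerivAt_abs_pos h

/-- Order-one moment cancellation: if `g` has vanishing zeroth moment, then
`∫ F(λ|x-y|) g(y) dy = -λ ∫∫ sgn(x-θy) F'(λ|x-θy|) y g(y) dθ dy`,
both integrals being absolutely convergent. -/
theorem stmt5 (F : ℝ → ℂ) (hF : ContDiff ℝ 1 F)
    (hbd : ∃ M : ℝ, ∀ s : ℝ, 0 ≤ s → ‖F s‖ + ‖deriv F s‖ ≤ M)
    (g : ℝ → ℂ) (hgm : Measurable g)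
    (hgint : Integrable (fun y : ℝ => (1 + |y|) * ‖g y‖))
    (hg0 : ∫ y : ℝ, g y = 0)
    (l : ℝ) (hl : 0 < l) (x : ℝ) :
    Integrable (fun y : ℝ => F (l * |x - y|) * g y) ∧
    Integrable
      (fun p : ℝ × ℝ =>
        (Real.sign (x - p.2 * p.1) : ℂ) * deriv F (l * |x - p.2 * p.1|) * ((p.1 : ℂ) * g p.1))
      (volume.prod (volume.restrict (Set.Icc 0 1))) ∧
    ∫ y : ℝ, F (l * |x - y|) * g y =
      -(l : ℂ) * ∫ y : ℝ, ∫ θ in (0:ℝ)..1,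
        (Real.sign (x - θ * y) : ℂ) * deriv F (l * |x - θ * y|) * ((y : ℂ) * g y) := by
  obtain ⟨M, hM⟩ := hbd
  have hM0 : 0 ≤ M := le_trans (by positivity) (hM 0 le_rfl)
  have hFb : ∀ s : ℝ, 0 ≤ s → ‖F s‖ ≤ M := fun s hs =>
    le_trans (le_add_of_nonneg_right (norm_nonneg _)) (hM s hs)
  have hF'b : ∀ s : ℝ, 0 ≤ s → ‖deriv F s‖ ≤ M := fun s hs =>
    le_trans (le_add_of_nonneg_left (norm_nonneg _)) (hM s hs)
  have hFc : Continuous F := hF.continuous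
  have hF'c : Continuous (deriv F) := hF.continuous_deriv le_rfl
  have hFd : Differentiable ℝ F := hF.differentiable one_ne_zero
  -- integrability of g and |y| g
  have hg : Integrable g := by
    refine hgint.mono' hgm.aestronglyMeasurable (ae_of_all _ fun y => ?_)
    nlinarith [norm_nonneg (g y), abs_nonneg y]
  have hyg : Integrable (fun y : ℝ => |y| * ‖g y‖) := by
    refine hgint.mono' (measurable_abs.mul hgm.norm).aestronglyMeasurable
      (ae_of_all _ fun y => ?_)
    rw [Real.norm_eq_abs, abs_of_nonneg (by positivity)]
    nlinarith [norm_nonneg (g y), abs_nonneg y]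
  -- first integrability
  have hi1 : Integrable (fun y : ℝ => F (l * |x - y|) * g y) := by
    refine (hg.norm.const_mul M).mono'
      (((hFc.comp (by continuity)).aestronglyMeasurable).mul hgm.aestronglyMeasurable)
      (ae_of_all _ fun y => ?_)
    rw [norm_mul]
    exact mul_le_mul_of_nonneg_right (hFb _ (by positivity)) (norm_nonneg _)
  -- measurability on the product space
  have hu_m : Measurable fun p : ℝ × ℝ => x - p.2 * p.1 :=
    measurable_const.sub (measurable_snd.mul measurable_fst)
  have hsd_m : Measurable fun p : ℝ × ℝ =>
      (Real.sign (x - p.2 * p.1) : ℂ) * deriv F (l * |x - p.2 * p.1|) :=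
    (Complex.measurable_ofReal.comp (sign_measurable'.comp hu_m)).mul
      (hF'c.measurable.comp (hu_m.abs.const_mul l))
  have hm2 : Measurable (fun p : ℝ × ℝ =>
      (Real.sign (x - p.2 * p.1) : ℂ) * deriv F (l * |x - p.2 * p.1|) *
        ((p.1 : ℂ) * g p.1)) :=
    hsd_m.mul ((Complex.measurable_ofReal.comp measurable_fst).mul (hgm.comp measurable_fst))
  -- second integrability
  have hi2 : Integrable
      (fun p : ℝ × ℝ =>
        (Real.sign (x - p.2 * p.1) : ℂ) * deriv F (l * |x - p.2 * p.1|) * ((p.1 : ℂ) * g p.1))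
      (volume.prod (volume.restrict (Set.Icc 0 1))) := by
    have hbound : Integrable
        (fun p : ℝ × ℝ => (M * ((1 + |p.1|) * ‖g p.1‖)) * (1 : ℝ))
        (volume.prod (volume.restrict (Set.Icc 0 1))) := by
      refine Integrable.mul_prod (f := fun y : ℝ => M * ((1 + |y|) * ‖g y‖))
        (g := fun _ : ℝ => (1 : ℝ)) (ν := volume.restrict (Set.Icc 0 1)) (hgint.const_mul M) ?_
      have : IntegrableOn (fun _ : ℝ => (1:ℝ)) (Set.Icc 0 1) volume :=
        integrableOn_const measure_Icc_lt_top.ne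
      exact this
    refine hbound.mono' hm2.aestronglyMeasurable (ae_of_all _ fun p => ?_)
    have h1 : ‖((Real.sign (x - p.2 * p.1) : ℝ) : ℂ)‖ ≤ 1 := by
      rw [Complex.norm_real, Real.norm_eq_abs]; exact abs_sign_le' _
    have h2 : ‖deriv F (l * |x - p.2 * p.1|)‖ ≤ M := hF'b _ (by positivity)
    have h3 : ‖((p.1 : ℝ) : ℂ)‖ = |p.1| := by rw [Complex.norm_real, Real.norm_eq_abs]
    calc ‖(Real.sign (x - p.2 * p.1) : ℂ) * deriv F (l * |x - p.2 * p.1|) *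
          ((p.1 : ℂ) * g p.1)‖
        = ‖((Real.sign (x - p.2 * p.1) : ℝ) : ℂ)‖ * ‖deriv F (l * |x - p.2 * p.1|)‖ *
          (|p.1| * ‖g p.1‖) := by rw [norm_mul, norm_mul, norm_mul, h3]
      _ ≤ (1 * M) * ((1 + |p.1|) * ‖g p.1‖) := by
          refine mul_le_mul (mul_le_mul h1 h2 (norm_nonneg _) zero_le_one) ?_
            (by positivity) (by positivity)
          exact mul_le_mul_of_nonneg_right (by linarith [abs_nonneg p.1]) (norm_nonneg _)
      _ = (M * ((1 + |p.1|) * ‖g p.1‖)) * (1 : ℝ) := by ring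
  refine ⟨hi1, hi2, ?_⟩
  -- the inner integral
  set S : ℝ → ℂ := fun y => ∫ θ in (0:ℝ)..1,
    (Real.sign (x - θ * y) : ℂ) * deriv F (l * |x - θ * y|) with hSdef
  -- pointwise FTC identity
  have key : ∀ y : ℝ, F (l * |x - y|) = F (l * |x|) + (-(l : ℂ) * y) * S y := by
    intro y
    rcases eq_or_ne y 0 with rfl | hy
    · simp
    · set h : ℝ → ℂ := fun θ => F (l * |x - θ * y|) with hh
      set D : ℝ → ℂ := fun θ =>
        if x - θ * y = 0 then (l * |y|) • deriv F 0
        else ((-(l * y)) * Real.sign (x - θ * y)) • deriv F (l * |x - θ * y|) with hD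
      have hcont : ContinuousOn h (Set.Icc 0 1) := (hFc.comp (by continuity)).continuousOn
      have hderiv : ∀ θ ∈ Set.Ioo (0:ℝ) 1, HasDerivWithinAt h (D θ) (Set.Ioi θ) θ := by
        intro θ _
        by_cases hc : x - θ * y = 0
        · -- one-sided derivative at the kink
          have hx : x = θ * y := by linarith [sub_eq_zero.mp hc]
          have hinner : HasDerivAt (fun t : ℝ => l * (|y| * (t - θ))) (l * |y|) θ := by
            simpa using (((hasDerivAt_id θ).sub_const θ).const_mul |y|).const_mul l
          have hky : HasDerivAt (fun t : ℝ => F (l * (|y| * (t - θ)))) ((l * |y|) • deriv F 0) θ := by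
            have := ((hFd (l * (|y| * (θ - θ)))).hasDerivAt).scomp θ hinner
            simpa [Function.comp_def] using this
          have hDθ : D θ = (l * |y|) • deriv F 0 := by rw [hD]; simp [hc]
          rw [hDθ]
          refine (hky.hasDerivWithinAt).congr (fun t ht => ?_) ?_
          · have ht' : θ ≤ t := le_of_lt ht
            have harg : l * |x - t * y| = l * (|y| * (t - θ)) := by
              have hxy : x - t * y = (θ - t) * y := by rw [hx]; ring
              rw [hxy, abs_mul, abs_of_nonpos (by linarith : θ - t ≤ 0)]
              ring
            show F (l * |x - t * y|) = F (l * (|y| * (t - θ)))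
            rw [harg]
          · show F (l * |x - θ * y|) = F (l * (|y| * (θ - θ)))
            rw [hc]; norm_num
        · -- ordinary chain rule
          have hu : HasDerivAt (fun t : ℝ => x - t * y) (-y) θ := by
            simpa using ((hasDerivAt_id θ).mul_const y).const_sub x
          have habs : HasDerivAt (fun t : ℝ => |x - t * y|)
              (Real.sign (x - θ * y) * (-y)) θ :=
            ((hasDerivAt_abs_sign hc).comp θ hu :)
          have hφ : HasDerivAt (fun t : ℝ => l * |x - t * y|)
              (l * (Real.sign (x - θ * y) * (-y))) θ := habs.const_mul l
          have hh' : HasDerivAt h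
              ((l * (Real.sign (x - θ * y) * (-y))) • deriv F (l * |x - θ * y|)) θ := by
            have := ((hFd (l * |x - θ * y|)).hasDerivAt).scomp θ hφ
            simpa [Function.comp_def, hh] using this
          have hDθ : D θ =
              (l * (Real.sign (x - θ * y) * (-y))) • deriv F (l * |x - θ * y|) := by
            rw [hD]; simp only [if_neg hc]
            congr 1
            ring
          rw [hDθ]
          exact hh'.hasDerivWithinAt
      have hint : IntervalIntegrable D volume 0 1 := by
        have hu_m1 : Measurable fun θ : ℝ => x - θ * y :=
          measurable_const.sub (measurable_id.mul_const y)
        have hDm : Measurable D := by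
          rw [hD]
          refine Measurable.ite (hu_m1 (measurableSet_singleton 0)) measurable_const ?_
          exact ((sign_measurable'.comp hu_m1).const_mul _).smul
            (hF'c.measurable.comp (hu_m1.abs.const_mul l))
        rw [intervalIntegrable_iff]
        have hμ : volume (Set.uIoc (0:ℝ) 1) < ⊤ :=
          lt_of_le_of_lt (measure_mono Set.uIoc_subset_uIcc) measure_Icc_lt_top
        have hconst : IntegrableOn (fun _ : ℝ => l * |y| * M) (Set.uIoc (0:ℝ) 1) volume :=
          integrableOn_const hμ.ne
        refine Integrable.mono' hconst
          hDm.aestronglyMeasurable.restrict (ae_of_all _ fun θ => ?_)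
        · rw [hD]
          by_cases hc : x - θ * y = 0
          · simp only [if_pos hc]
            rw [norm_smul, Real.norm_eq_abs, abs_of_nonneg (by positivity)]
            exact mul_le_mul_of_nonneg_left (hF'b 0 le_rfl) (by positivity)
          · simp only [if_neg hc]
            rw [norm_smul, Real.norm_eq_abs, abs_mul]
            have e1 : |(-(l * y))| ≤ l * |y| := by
              rw [abs_neg, abs_mul, abs_of_pos hl]
            have e2 : |(-(l * y))| * |Real.sign (x - θ * y)| ≤ (l * |y|) * 1 :=
              mul_le_mul e1 (abs_sign_le' _) (abs_nonneg _) (by positivity)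
            calc |(-(l * y))| * |Real.sign (x - θ * y)| * ‖deriv F (l * |x - θ * y|)‖
                ≤ ((l * |y|) * 1) * M :=
                  mul_le_mul e2 (hF'b _ (by positivity)) (norm_nonneg _) (by positivity)
              _ = l * |y| * M := by ring
      have hftc := intervalIntegral.integral_eq_sub_of_hasDeriv_right_of_le zero_le_one
        hcont hderiv hint
      have hcong : ∫ θ in (0:ℝ)..1, D θ =
          ∫ θ in (0:ℝ)..1, (-(l : ℂ) * y) *
            ((Real.sign (x - θ * y) : ℂ) * deriv F (l * |x - θ * y|)) := by
        apply intervalIntegral.integral_congr_ae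
        have hnull : ∀ᵐ θ : ℝ, x - θ * y ≠ 0 := by
          rw [ae_iff]
          refine measure_mono_null (fun θ hθ => ?_) (measure_singleton (x / y))
          simp only [Set.mem_setOf_eq, not_not] at hθ
          have : θ * y = x := by linarith [sub_eq_zero.mp hθ]
          simp only [Set.mem_singleton_iff]
          field_simp
          linarith
        filter_upwards [hnull] with θ hθ _
        rw [hD]
        simp only [if_neg hθ]
        rw [Complex.real_smul]
        push_cast
        ring
      rw [hcong, intervalIntegral.integral_const_mul] at hftc
      have h1 : h 1 = F (l * |x - y|) := by rw [hh]; norm_num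
      have h0 : h 0 = F (l * |x|) := by rw [hh]; norm_num
      rw [h1, h0] at hftc
      rw [hSdef]
      linear_combination -hftc
  -- measurability of S
  have hSmeas : AEStronglyMeasurable S volume := by
    have heq : S = fun y => ∫ θ, ((Real.sign (x - θ * y) : ℂ) * deriv F (l * |x - θ * y|))
        ∂(volume.restrict (Set.Ioc 0 1)) :=
      funext fun y => intervalIntegral.integral_of_le zero_le_one
    rw [heq]
    exact (hsd_m.aestronglyMeasurable
      (μ := volume.prod (volume.restrict (Set.Ioc 0 1)))).integral_prod_right'
  -- bound on S
  have hSb : ∀ y : ℝ, ‖S y‖ ≤ M := by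
    intro y
    have := intervalIntegral.norm_integral_le_of_norm_le_const (a := (0:ℝ)) (b := 1) (C := M)
      (f := fun θ => (Real.sign (x - θ * y) : ℂ) * deriv F (l * |x - θ * y|))
      (fun θ _ => by
        rw [norm_mul]
        calc ‖((Real.sign (x - θ * y) : ℝ) : ℂ)‖ * ‖deriv F (l * |x - θ * y|)‖
            ≤ 1 * M :=
              mul_le_mul (by rw [Complex.norm_real, Real.norm_eq_abs]; exact abs_sign_le' _)
                (hF'b _ (by positivity)) (norm_nonneg _) zero_le_one
          _ = M := one_mul M)
    simpa using this
  -- rewrite the inner integral on the RHS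
  have hinner : ∀ y : ℝ, (∫ θ in (0:ℝ)..1,
      (Real.sign (x - θ * y) : ℂ) * deriv F (l * |x - θ * y|) * ((y : ℂ) * g y)) =
      S y * ((y : ℂ) * g y) := fun y =>
    intervalIntegral.integral_mul_const _ _
  -- integrability of the pieces
  have hiA : Integrable (fun y : ℝ => F (l * |x|) * g y) := hg.const_mul _
  have hiB : Integrable (fun y : ℝ => (-(l : ℂ) * y) * S y * g y) := by
    refine (hyg.const_mul (l * M)).mono'
      ((((aestronglyMeasurable_const.mul
        (Complex.measurable_ofReal.aestronglyMeasurable)).mul hSmeas)).mul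
        hgm.aestronglyMeasurable) (ae_of_all _ fun y => ?_)
    rw [norm_mul, norm_mul, norm_mul, norm_neg]
    have h3 : ‖((y : ℝ) : ℂ)‖ = |y| := by rw [Complex.norm_real, Real.norm_eq_abs]
    have h4 : ‖((l : ℝ) : ℂ)‖ = l := by
      rw [Complex.norm_real, Real.norm_eq_abs, abs_of_pos hl]
    rw [h3, h4]
    calc l * |y| * ‖S y‖ * ‖g y‖ ≤ l * |y| * M * ‖g y‖ := by
          gcongr
          exact hSb y
      _ = l * M * (|y| * ‖g y‖) := by ring
  -- assemble
  calc ∫ y : ℝ, F (l * |x - y|) * g y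
      = ∫ y : ℝ, (F (l * |x|) * g y + (-(l : ℂ) * y) * S y * g y) := by
        apply integral_congr_ae (ae_of_all _ fun y => ?_)
        rw [key y]; ring
    _ = (∫ y : ℝ, F (l * |x|) * g y) + ∫ y : ℝ, (-(l : ℂ) * y) * S y * g y :=
        integral_add hiA hiB
    _ = F (l * |x|) * (∫ y : ℝ, g y) + ∫ y : ℝ, (-(l : ℂ) * y) * S y * g y := by
        rw [integral_const_mul]
    _ = ∫ y : ℝ, (-(l : ℂ) * y) * S y * g y := by rw [hg0, mul_zero, zero_add]
    _ = ∫ y : ℝ, -(l : ℂ) * (S y * ((y : ℂ) * g y)) := by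
        apply integral_congr_ae (ae_of_all _ fun y => ?_)
        ring
    _ = -(l : ℂ) * ∫ y : ℝ, S y * ((y : ℂ) * g y) := integral_const_mul _ _
    _ = -(l : ℂ) * ∫ y : ℝ, ∫ θ in (0:ℝ)..1,
          (Real.sign (x - θ * y) : ℂ) * deriv F (l * |x - θ * y|) * ((y : ℂ) * g y) := by
        congr 1
        apply integral_congr_ae (ae_of_all _ fun y => ?_)
        rw [hinner y]
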